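/- Let G be the graph on the set Δ^n_e of degree-e monomials in x_0,…,x_n, with an edge {x^{α+γ}, x^{β+γ}} for each degree (e−d) monomial x^γ, where x^α and x^β are fixed distinct degree-d monomials. Then G is a forest (contains no cycles). -/

import Mathlib

/-- Step lemma: if the edge `u~x` went "up" by `k = B i - A i` in coordinate `i`,
then any next edge `x~z` with `z ≠ u` also goes up by `k`. -/
private lemma macaulay_step {n d c : ℕ} (A B : Fin (n + 1) → ℕ) (i : Fin (n + 1))
    (hi : A i < B i)
    (G : SimpleGraph {a : Fin (n + 1) → ℕ // ∑ i, a i = d + c})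
    (hG : ∀ u v, G.Adj u v ↔ u ≠ v ∧ ∃ γ : Fin (n + 1) → ℕ,
      (∑ i, γ i = c) ∧
      ((u.1 = γ + A ∧ v.1 = γ + B) ∨ (u.1 = γ + B ∧ v.1 = γ + A)))
    {u x z : {a : Fin (n + 1) → ℕ // ∑ i, a i = d + c}}
    (hux : G.Adj u x) (hxz : G.Adj x z) (huz : u ≠ z)
    (hw : x.1 i = u.1 i + (B i - A i)) : z.1 i = x.1 i + (B i - A i) := by
  rw [hG] at hux hxz
  obtain ⟨-, γ, -, hcase1⟩ := hux
  obtain ⟨-, γ', -, hcase2⟩ := hxz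
  rcases hcase1 with ⟨hu1, hx1⟩ | ⟨hu1, hx1⟩
  · rcases hcase2 with ⟨hx2, hz2⟩ | ⟨hx2, hz2⟩
    · have e1 : x.1 i = γ' i + A i := by rw [hx2]; rfl
      have e2 : z.1 i = γ' i + B i := by rw [hz2]; rfl
      omega
    · -- then γ = γ', so z = u, contradiction
      have : γ = γ' := by
        funext j
        have : γ j + B j = γ' j + B j := by
          have := congrFun (hx1.symm.trans hx2) j
          exact this
        omega
      exact absurd (Subtype.ext (hu1.trans (this ▸ hz2.symm))) huz
  · -- first edge went down: contradiction with hw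
    have e1 : u.1 i = γ i + B i := by rw [hu1]; rfl
    have e2 : x.1 i = γ i + A i := by rw [hx1]; rfl
    omega

/-- Along a path whose first step went up by `k`, every step goes up by `k`. -/
private lemma macaulay_walk_mono {V : Type*} (G : SimpleGraph V) (w : V → ℕ) (k : ℕ)
    (step : ∀ u x z : V, G.Adj u x → G.Adj x z → u ≠ z → w x = w u + k → w z = w x + k) :
    ∀ {x y : V} (q : G.Walk x y) {u : V}, (u :: q.support).Nodup → G.Adj u x →
      w x = w u + k →
      w y = w x + k * q.length ∧
        ∀ z, G.Adj y z → z ∉ q.support → (q.Nil → z ≠ u) → w z = w y + k := by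
  intro x y q
  induction q with
  | nil =>
    intro u hnd hu hw
    refine ⟨by simp, fun z hz hz1 hz2 => ?_⟩
    exact step u _ z hu hz (Ne.symm (hz2 SimpleGraph.Walk.Nil.nil)) hw
  | @cons a b yy h' q' ih =>
    intro u hnd hu hw
    have hx'mem : b ∈ (SimpleGraph.Walk.cons h' q').support := by
      simp [SimpleGraph.Walk.support_cons, SimpleGraph.Walk.start_mem_support]
    have hux' : u ≠ b := by
      intro hEq
      have : u ∉ (SimpleGraph.Walk.cons h' q').support := (List.nodup_cons.mp hnd).1
      exact this (hEq ▸ hx'mem)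
    have hwx' : w b = w a + k := step u a b hu h' hux' hw
    have hnd' : (a :: q'.support).Nodup := by
      have := hnd.of_cons
      simpa [SimpleGraph.Walk.support_cons] using this
    obtain ⟨hlen, hext⟩ := ih hnd' h' hwx'
    constructor
    · rw [hlen, hwx']; ring_nf; simp [SimpleGraph.Walk.length_cons]; ring
    · intro z hz hz1 _
      have hz1' : z ∉ q'.support := by
        simp [SimpleGraph.Walk.support_cons] at hz1
        exact hz1.2
      have hzx : z ≠ a := by
        simp [SimpleGraph.Walk.support_cons] at hz1
        exact hz1.1
      exact hext z hz hz1' (fun _ => hzx)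

theorem macaulay_binomial_graph_is_acyclic
    {n d c : ℕ} (α β : Fin (n + 1) → ℕ)
    (hα : ∑ i, α i = d) (hβ : ∑ i, β i = d) (hne : α ≠ β)
    (G : SimpleGraph {a : Fin (n + 1) → ℕ // ∑ i, a i = d + c})
    (hG : ∀ u v, G.Adj u v ↔ u ≠ v ∧ ∃ γ : Fin (n + 1) → ℕ,
      (∑ i, γ i = c) ∧
      ((u.1 = γ + α ∧ v.1 = γ + β) ∨ (u.1 = γ + β ∧ v.1 = γ + α))) :
    G.IsAcyclic := by
  -- Find coordinates where α < β and β < α.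
  have hex : (∃ i, α i < β i) ∧ (∃ j, β j < α j) := by
    constructor
    · by_contra hcon
      push_neg at hcon
      have : ∀ i ∈ Finset.univ, β i = α i := by
        rw [← Finset.sum_eq_sum_iff_of_le (fun i _ => hcon i)]
        rw [hα, hβ]
      exact hne (funext fun i => (this i (Finset.mem_univ i)).symm)
    · by_contra hcon
      push_neg at hcon
      have : ∀ i ∈ Finset.univ, α i = β i := by
        rw [← Finset.sum_eq_sum_iff_of_le (fun i _ => hcon i)]
        rw [hα, hβ]
      exact hne (funext fun i => this i (Finset.mem_univ i))
  obtain ⟨⟨i, hi⟩, ⟨j, hj⟩⟩ := hex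
  -- symmetric form of hG
  have hG' : ∀ u v, G.Adj u v ↔ u ≠ v ∧ ∃ γ : Fin (n + 1) → ℕ,
      (∑ i, γ i = c) ∧
      ((u.1 = γ + β ∧ v.1 = γ + α) ∨ (u.1 = γ + α ∧ v.1 = γ + β)) := by
    intro u v
    rw [hG]
    constructor
    · rintro ⟨h1, γ, h2, h3⟩; exact ⟨h1, γ, h2, h3.symm⟩
    · rintro ⟨h1, γ, h2, h3⟩; exact ⟨h1, γ, h2, h3.symm⟩
  intro v p hp
  cases p with
  | nil => exact hp.ne_nil rfl
  | @cons _ x₂ _ h q =>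
    have hq_nodup : q.support.Nodup := by
      have := hp.support_nodup
      simpa [SimpleGraph.Walk.support_cons] using this
    have hlen3 : 3 ≤ (SimpleGraph.Walk.cons h q).length := hp.three_le_length
    have hqlen : 2 ≤ q.length := by
      simp [SimpleGraph.Walk.length_cons] at hlen3; omega
    -- decompose q into q'.concat h_last
    have hqnotnil : ¬ q.Nil := by
      rw [SimpleGraph.Walk.nil_iff_length_eq]; omega
    obtain ⟨x₂', h2, q2, rfl⟩ := SimpleGraph.Walk.not_nil_iff.mp hqnotnil
    obtain ⟨t, q', hlast, hqe⟩ := SimpleGraph.Walk.exists_cons_eq_concat h2 q2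
    rw [hqe] at hq_nodup hqlen
    have hsupp : (q'.concat hlast).support = q'.support ++ [v] := by
      rw [SimpleGraph.Walk.support_concat]
    rw [hsupp] at hq_nodup
    have hvq' : v ∉ q'.support := by
      intro hm
      have := List.disjoint_of_nodup_append hq_nodup
      exact this hm (by simp)
    have hq'nodup : q'.support.Nodup := (List.nodup_append.mp hq_nodup).1
    have hnd : (v :: q'.support).Nodup := List.nodup_cons.mpr ⟨hvq', hq'nodup⟩
    have hq'len : 1 ≤ q'.length := by
      rw [SimpleGraph.Walk.length_concat] at hqlen; omega
    have hq'notnil : ¬ q'.Nil := by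
      rw [SimpleGraph.Walk.nil_iff_length_eq]; omega
    -- first edge direction
    have hadj := (hG v x₂).mp h
    obtain ⟨-, γ, -, hcase⟩ := hadj
    rcases hcase with ⟨hv1, hx1⟩ | ⟨hv1, hx1⟩
    · -- up direction: use coordinate i, constants α β
      set k := β i - α i with hk
      have hk0 : 0 < k := by omega
      have hw : x₂.1 i = v.1 i + k := by
        have e1 : v.1 i = γ i + α i := by rw [hv1]; rfl
        have e2 : x₂.1 i = γ i + β i := by rw [hx1]; rfl
        omega
      obtain ⟨hlen, hext⟩ := macaulay_walk_mono G (fun a => a.1 i) k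
        (fun u x z => macaulay_step α β i hi G hG) q' hnd h hw
      have hfin := hext v hlast hvq' (fun hnil => absurd hnil hq'notnil)
      omega
    · -- down direction: use coordinate j, constants β α
      set k := α j - β j with hk
      have hk0 : 0 < k := by omega
      have hw : x₂.1 j = v.1 j + k := by
        have e1 : v.1 j = γ j + β j := by rw [hv1]; rfl
        have e2 : x₂.1 j = γ j + α j := by rw [hx1]; rfl
        omega
      obtain ⟨hlen, hext⟩ := macaulay_walk_mono G (fun a => a.1 j) k
        (fun u x z => macaulay_step β α j hj G hG') q' hnd h hw
      have hfin := hext v hlast hvq' (fun hnil => absurd hnil hq'notnil)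
      omega
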